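/- Let μ > 0, ν > 0 and 0 < p < 1 be real numbers, and for natural numbers y define a_y := μ^(νy) / ((1−p)^y · (y!)^ν). Then the sequence (a_y) is unimodal: a_{y+1} ≥ a_y if and only if y + 1 ≤ μ/(1−p)^(1/ν), and a_{y+1} ≤ a_y if and only if y + 1 ≥ μ/(1−p)^(1/ν); consequently (a_y) is nondecreasing for y ≤ ⌊μ/(1−p)^(1/ν)⌋ and nonincreasing for y ≥ ⌊μ/(1−p)^(1/ν)⌋. -/

import Mathlib

/-- For `μ > 0`, `ν > 0`, `0 < p < 1` and
`a_y := μ^(νy) / ((1−p)^y · (y!)^ν)`, the sequence `(a_y)` is unimodal: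
`a_{y+1} ≥ a_y ↔ y + 1 ≤ μ/(1−p)^(1/ν)` and `a_{y+1} ≤ a_y ↔ y + 1 ≥ μ/(1−p)^(1/ν)`;
consequently `(a_y)` is nondecreasing for `y ≤ ⌊μ/(1−p)^(1/ν)⌋` and nonincreasing for
`y ≥ ⌊μ/(1−p)^(1/ν)⌋`. -/
theorem stmt_19 (μ ν p : ℝ) (hμ : 0 < μ) (hν : 0 < ν) (hp0 : 0 < p) (hp1 : p < 1)
    (a : ℕ → ℝ)
    (ha : ∀ y : ℕ, a y = μ ^ (ν * (y : ℝ)) / ((1 - p) ^ y * (Nat.factorial y : ℝ) ^ ν)) :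
    (∀ y : ℕ, a y ≤ a (y + 1) ↔ (y : ℝ) + 1 ≤ μ / (1 - p) ^ (1 / ν)) ∧
    (∀ y : ℕ, a (y + 1) ≤ a y ↔ μ / (1 - p) ^ (1 / ν) ≤ (y : ℝ) + 1) ∧
    MonotoneOn a (Set.Iic ⌊μ / (1 - p) ^ (1 / ν)⌋₊) ∧
    AntitoneOn a (Set.Ici ⌊μ / (1 - p) ^ (1 / ν)⌋₊) := by
  have h1p : (0:ℝ) < 1 - p := by linarith
  set M := μ / (1 - p) ^ (1 / ν) with hM
  have hMpos : 0 < M := by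
    apply div_pos hμ; positivity
  have hMrpow : M ^ ν = μ ^ ν / (1 - p) := by
    rw [hM, Real.div_rpow (le_of_lt hμ) (by positivity),
      ← Real.rpow_mul (le_of_lt h1p), one_div, inv_mul_cancel₀ (ne_of_gt hν), Real.rpow_one]
  have key : ∀ y : ℕ, (a y ≤ a (y + 1) ↔ (y : ℝ) + 1 ≤ M) ∧
      (a (y + 1) ≤ a y ↔ M ≤ (y : ℝ) + 1) := by
    intro y
    have hfac : (0:ℝ) < (Nat.factorial y : ℝ) := by
      exact_mod_cast Nat.factorial_pos y
    have hfs : (Nat.factorial (y + 1) : ℝ) = ((y : ℝ) + 1) * (Nat.factorial y : ℝ) := by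
      push_cast [Nat.factorial_succ]; ring
    have hexp : μ ^ (ν * ((y : ℝ) + 1)) = μ ^ (ν * (y : ℝ)) * μ ^ ν := by
      rw [← Real.rpow_add hμ]; ring_nf
    have hfs' : (Nat.factorial (y + 1) : ℝ) ^ ν
        = ((y : ℝ) + 1) ^ ν * (Nat.factorial y : ℝ) ^ ν := by
      rw [hfs, Real.mul_rpow (by positivity) (le_of_lt hfac)]
    have hy1 : (0:ℝ) < ((y : ℝ) + 1) ^ ν := by positivity
    have hrec : a (y + 1) = a y * (μ ^ ν / ((1 - p) * ((y : ℝ) + 1) ^ ν)) := by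
      rw [ha, ha]
      push_cast
      rw [hexp, hfs', pow_succ]
      have h1 : ((1 - p) ^ y : ℝ) ≠ 0 := by positivity
      have h2 : ((Nat.factorial y : ℝ) ^ ν) ≠ 0 := by positivity
      field_simp
    have hay : 0 < a y := by
      rw [ha]; positivity
    have hiff1 : (1 - p) * ((y : ℝ) + 1) ^ ν ≤ μ ^ ν ↔ (y : ℝ) + 1 ≤ M := by
      rw [← Real.rpow_le_rpow_iff (by positivity : (0:ℝ) ≤ (y:ℝ)+1) (le_of_lt hMpos) hν,
        hMrpow, le_div_iff₀ h1p]
      constructor <;> intro h <;> linarith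
    have hiff2 : μ ^ ν ≤ (1 - p) * ((y : ℝ) + 1) ^ ν ↔ M ≤ (y : ℝ) + 1 := by
      rw [← Real.rpow_le_rpow_iff (le_of_lt hMpos) (by positivity : (0:ℝ) ≤ (y:ℝ)+1) hν,
        hMrpow, div_le_iff₀ h1p]
      constructor <;> intro h <;> linarith
    constructor
    · rw [hrec, le_mul_iff_one_le_right hay, one_le_div (by positivity), ← hiff1]
    · rw [hrec, mul_le_iff_le_one_right hay, div_le_one (by positivity), ← hiff2]
  have mono : ∀ n m : ℕ, n ≤ m → m ≤ ⌊M⌋₊ → a n ≤ a m := by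
    intro n m hnm
    induction m, hnm using Nat.le_induction with
    | base => intro _; exact le_rfl
    | succ k hk ih =>
      intro hm
      refine le_trans (ih (le_trans (Nat.le_succ k) hm)) ?_
      apply (key k).1.mpr
      have h1 : ((k : ℝ) + 1) ≤ (⌊M⌋₊ : ℝ) := by exact_mod_cast hm
      have h2 : ((⌊M⌋₊ : ℕ) : ℝ) ≤ M := Nat.floor_le hMpos.le
      linarith
  have anti : ∀ n m : ℕ, n ≤ m → ⌊M⌋₊ ≤ n → a m ≤ a n := by
    intro n m hnm
    induction m, hnm using Nat.le_induction with
    | base => intro _; exact le_rfl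
    | succ k hk ih =>
      intro hn
      refine le_trans ?_ (ih hn)
      apply (key k).2.mpr
      have h1 : (⌊M⌋₊ : ℝ) ≤ (k : ℝ) := by exact_mod_cast le_trans hn hk
      have h2 := Nat.lt_floor_add_one M
      linarith
  exact ⟨fun y => (key y).1, fun y => (key y).2,
    fun x hx y hy hxy => mono x y hxy hy,
    fun x hx y hy hxy => anti x y hxy hx⟩
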